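/- Let s = ψ_X(x₁x₂⋯xₙ⋯) be an X-AR word with xᵢ ∈ X, let B be an alphabet with a bijection μ : B → X, and let z = x₁⋯x_m be such that ψ_X(z) is full. Define the morphism φ_z : B* → A* by φ_z(b) = ψ_X(zμ(b)) ψ_X(z)^{-1} for each b ∈ B (the word obtained from ψ_X(zμ(b)) by erasing its suffix ψ_X(z)). Then for every w ∈ B*, ψ_X(zμ(w)) = φ_z(ψ(w)) ψ_X(z), where ψ is the palindromization map over B* and μ is extended to a morphism from B* to X*. -/

import Mathlib

open List

/-- Right palindromic closure: `w⁺ = u Q u~` where `Q` is the longest palindromic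
suffix of `w = uQ`; equivalently the shortest palindrome having `w` as a prefix. -/
noncomputable def palClosure {A : Type*} (w : List A) : List A :=
  letI : DecidablePred fun k => (w.drop k).reverse = w.drop k :=
    fun _ => Classical.propDecidable _
  w ++ (w.take (Nat.find (⟨w.length, by simp⟩ :
    ∃ k, (w.drop k).reverse = w.drop k))).reverse

/-- The palindromization map `ψ_X` relative to a code `X`, evaluated on the
(unique) `X`-factorization `l = [x₁, …, xₙ]` of a word of `X*`. -/
noncomputable def psiList {A : Type*} (l : List (List A)) : List A :=
  l.foldl (fun p x => palClosure (p ++ x)) []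

/-- The (usual) palindromization map `ψ` on words, letter by letter. -/
noncomputable def psiWord {A : Type*} (w : List A) : List A :=
  w.foldl (fun p a => palClosure (p ++ [a])) []

/-- `X` is a code: nonempty words with unique factorization over `X`. -/
def IsCode {A : Type*} (X : Set (List A)) : Prop :=
  (∀ x ∈ X, x ≠ []) ∧
  ∀ l l' : List (List A), (∀ w ∈ l, w ∈ X) → (∀ w ∈ l', w ∈ X) →
    l.flatten = l'.flatten → l = l'

/-- `X` is a prefix code: nonempty words, none a proper prefix of another. -/
def IsPrefixCode {A : Type*} (X : Set (List A)) : Prop :=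
  (∀ x ∈ X, x ≠ []) ∧ ∀ x ∈ X, ∀ y ∈ X, x <+: y → x = y

/-- `X` is a maximal prefix code over `A`. -/
def IsMaximalPrefixCode {A : Type*} (X : Set (List A)) : Prop :=
  IsPrefixCode X ∧ ∀ Y : Set (List A), IsPrefixCode Y → X ⊆ Y → X = Y

/-- `w ∈ X*`. -/
def InStar {A : Type*} (X : Set (List A)) (w : List A) : Prop :=
  ∃ l : List (List A), (∀ u ∈ l, u ∈ X) ∧ l.flatten = w

/-- The finite word `w` is a prefix of the infinite word `s`. -/
def PrefixOfInf {A : Type*} (w : List A) (s : ℕ → A) : Prop :=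
  ∀ i : ℕ, ∀ h : i < w.length, w.get ⟨i, h⟩ = s i

/-- The finite word `w` is a factor of the infinite word `s`. -/
def FactorOfInf {A : Type*} (w : List A) (s : ℕ → A) : Prop :=
  ∃ i : ℕ, w = List.ofFn fun k : Fin w.length => s (i + k.1)

/-- `X` has finite deciphering delay. -/
def FiniteDecipheringDelay {A : Type*} (X : Set (List A)) : Prop :=
  ∃ k : ℕ, ∀ x ∈ X, ∀ x' ∈ X,
    (∃ (l l' : List (List A)) (r : List A),
      (∀ w ∈ l, w ∈ X) ∧ l.length = k ∧ (∀ w ∈ l', w ∈ X) ∧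
      x ++ l.flatten ++ r = x' ++ l'.flatten) → x = x'

/-- The sequence `y = y₁y₂⋯ ∈ X^ω` is alternating. -/
def Alternating {A : Type*} (y : ℕ → List A) : Prop :=
  ∃ a b : A, a ≠ b ∧ ∃ (lam : List A) (idx : ℕ → ℕ), StrictMono idx ∧
    ∀ k : ℕ, (lam ++ [a]) <+: y (idx (2 * k)) ∧ (lam ++ [b]) <+: y (idx (2 * k + 1))

/-- The infinite word `s` is ultimately periodic. -/
def UltimatelyPeriodic {A : Type*} (s : ℕ → A) : Prop :=
  ∃ p : ℕ, 0 < p ∧ ∃ N : ℕ, ∀ n ≥ N, s (n + p) = s n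

/-- The infinite word `s` is uniformly recurrent: every factor occurs in every
sufficiently long factor of `s`. -/
def UniformlyRecurrent {A : Type*} (s : ℕ → A) : Prop :=
  ∀ w : List A, FactorOfInf w s →
    ∃ N : ℕ, ∀ i : ℕ, w <:+: List.ofFn fun k : Fin N => s (i + k.1)

/-- Factor complexity of the infinite word `s`. -/
noncomputable def complexity {A : Type*} (s : ℕ → A) (n : ℕ) : ℕ :=
  {u : List A | u.length = n ∧ FactorOfInf u s}.ncard

/-- A word `w` is primitive if it is not a proper power. -/
def Primitive {A : Type*} (w : List A) : Prop :=
  ∀ (v : List A) (n : ℕ), 1 < n → w ≠ (List.replicate n v).flatten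

/-- `p` is a period of the word `w`. -/
def IsPeriodOf {A : Type*} (p : ℕ) (w : List A) : Prop :=
  0 < p ∧ ∀ i : ℕ, ∀ h : i + p < w.length,
    w.get ⟨i, by omega⟩ = w.get ⟨i + p, h⟩

/-- `ψ_X(x₁⋯x_m)` (given by the factorization `l = [x₁,…,x_m]`) is *full*:
(F1) every `x ∈ X` occurs in `l`; (F2) the minimal period of `ψ_X(l)` is at
least `ℓ_X = max_{x∈X} |x|`; (F3) for each `x ∈ X`, the longest palindromic
prefix of `ψ_X(l)` followed by `x` is `ψ_X(x₁⋯x_{r_x−1})`, where `r_x` is the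
last position of `x` in `l`. -/
def Full {A : Type*} (X : Set (List A)) (l : List (List A)) : Prop :=
  (∀ x ∈ X, x ∈ l) ∧
  (∀ p : ℕ, IsPeriodOf p (psiList l) → ∀ x ∈ X, x.length ≤ p) ∧
  (∀ x ∈ X, ∃ r : Fin l.length, l.get r = x ∧
    (∀ r' : Fin l.length, l.get r' = x → r'.1 ≤ r.1) ∧
    psiList (l.take r.1) ++ x <+: psiList l ∧
    ∀ P : List A, P.reverse = P → P ++ x <+: psiList l →
      P.length ≤ (psiList (l.take r.1)).length)

section PalBasic
variable {A : Type*}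


/-- characterization of palClosure -/
lemma palClosure_eq_of (w : List A) (k : ℕ)
    (h1 : (w.drop k).reverse = w.drop k)
    (h2 : ∀ j < k, (w.drop j).reverse ≠ w.drop j) :
    palClosure w = w ++ (w.take k).reverse := by
  letI : DecidablePred fun k => (w.drop k).reverse = w.drop k :=
    fun _ => Classical.propDecidable _
  unfold palClosure
  congr 3
  exact (Nat.find_eq_iff _).mpr ⟨h1, h2⟩

lemma palClosure_spec (w : List A) :
    ∃ k ≤ w.length, ((w.drop k).reverse = w.drop k ∧
      ∀ j < k, (w.drop j).reverse ≠ w.drop j) ∧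
      palClosure w = w ++ (w.take k).reverse := by
  classical
  letI : DecidablePred fun k => (w.drop k).reverse = w.drop k :=
    fun _ => Classical.propDecidable _
  have hex : ∃ k, (w.drop k).reverse = w.drop k := ⟨w.length, by simp⟩
  refine ⟨Nat.find hex, ?_, ⟨Nat.find_spec hex, fun j hj => Nat.find_min hex hj⟩, ?_⟩
  · exact Nat.find_le (by simp)
  · exact palClosure_eq_of w _ (Nat.find_spec hex) (fun j hj => Nat.find_min hex hj)

lemma prefix_palClosure (w : List A) : w <+: palClosure w := by
  obtain ⟨k, -, -, hw⟩ := palClosure_spec w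
  rw [hw]; exact prefix_append _ _

lemma palClosure_palindrome (w : List A) : (palClosure w).reverse = palClosure w := by
  obtain ⟨k, hk, ⟨hpal, -⟩, hw⟩ := palClosure_spec w
  have hrev : w.reverse = w.drop k ++ (w.take k).reverse := by
    conv_lhs => rw [show w = w.take k ++ w.drop k from (take_append_drop k w).symm]
    rw [reverse_append, hpal]
  rw [hw, reverse_append, reverse_reverse, hrev, ← append_assoc, take_append_drop]

/-- minimality (length version) -/
lemma palClosure_length_le {w T : List A} (hT : T.reverse = T) (hw : w <+: T) :
    (palClosure w).length ≤ T.length := by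
  obtain ⟨R, rfl⟩ := hw
  obtain ⟨k, hk, ⟨hpal, hmin⟩, hpc⟩ := palClosure_spec w
  have hlen : (palClosure w).length = w.length + k := by
    rw [hpc]; simp [length_take, Nat.min_eq_left hk]
  by_cases hR : w.length ≤ R.length
  · rw [hlen]; simp only [length_append]; omega
  · push_neg at hR
    have h0 : (w ++ R).reverse = R.reverse ++ w.reverse := by simp
    rw [hT] at h0
    have h1 : w.drop R.length ++ R = w.reverse := by
      have h2 := congrArg (fun l => l.drop R.length) h0
      simp only [drop_append, length_reverse, Nat.sub_self,
        Nat.sub_eq_zero_of_le hR.le, drop_zero, Nat.sub_zero, take_length,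
        take_zero, reverse_nil, nil_append, drop_reverse] at h2
      exact h2
    have h2 : w.drop R.length = w.reverse.take (w.length - R.length) := by
      rw [← h1, take_append, length_drop, Nat.sub_self, take_zero,
        append_nil, take_of_length_le (le_of_eq (length_drop))]
    have hpal2 : (w.drop R.length).reverse = w.drop R.length := by
      conv_lhs => rw [h2, List.reverse_take, reverse_reverse, length_reverse]
      congr 1
      omega
    have hk2 : k ≤ R.length := by
      by_contra h
      exact hmin R.length (by omega) hpal2
    rw [hlen]; simp only [length_append]; omega

end PalBasic

section PalMore
variable {A : Type*}

lemma palClosure_length_lb (w : List A) : w.length ≤ (palClosure w).length :=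
  (prefix_palClosure w).length_le

/-- Lemma C: a palindromic prefix of `palClosure w` of length ≥ |w| is `palClosure w`. -/
lemma pal_prefix_palClosure_eq {w T : List A} (hT : T.reverse = T)
    (hpre : T <+: palClosure w) (hlen : w.length ≤ T.length) :
    T = palClosure w := by
  have hwT : w <+: T := prefix_of_prefix_length_le (prefix_palClosure w) hpre hlen
  have := palClosure_length_le hT hwT
  exact hpre.eq_of_length_le this

/-- shared sublemma: a long palindromic suffix of `V ++ x` yields a palindromic
prefix of `V` followed by `x`. -/
lemma pal_suffix_structure {V x : List A} (hV : V.reverse = V) (k' : ℕ)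
    (hk : k' ≤ V.length) (ht : x.length ≤ V.length - k')
    (hpal : ((V ++ x).drop k').reverse = (V ++ x).drop k') :
    ∃ U₁ : List A, U₁.reverse = U₁ ∧ U₁ ++ x <+: V ∧ U₁.length = V.length - k' - x.length := by
  set t := V.length - k' with hts
  -- (V ++ x).drop k' = V.drop k' ++ x
  have hdropa : (V ++ x).drop k' = V.drop k' ++ x := by
    rw [drop_append, Nat.sub_eq_zero_of_le hk, drop_zero]
  -- V.drop k' = (V.take t).reverse
  have hUdef : V.drop k' = (V.take t).reverse := by
    rw [List.reverse_take]
    conv_lhs => rw [← hV]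
    congr 1
    omega
  set U := V.take t with hU
  have hUlen : U.length = t := by
    simp [hU, length_take]
    omega
  -- palindromicity: U.reverse ++ x = x.reverse ++ U
  have heq : U.reverse ++ x = x.reverse ++ U := by
    have h1 : (V ++ x).drop k' = U.reverse ++ x := by rw [hdropa, hUdef]
    have h2 := hpal
    rw [h1] at h2
    simpa [reverse_append, reverse_reverse] using h2.symm
  -- U ends with x
  have hx1 : U.reverse.take x.length = x.reverse := by
    have h5 := congrArg (fun l => l.take x.length) heq
    simp only [take_append, length_reverse, hUlen,
      Nat.sub_eq_zero_of_le ht, Nat.sub_self, take_zero, append_nil] at h5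
    conv at h5 => rhs; rw [show x.length = x.reverse.length by simp, take_length]
    exact h5
  have hx2 : U.drop (t - x.length) = x := by
    have := congrArg reverse hx1
    rw [List.reverse_take, reverse_reverse, reverse_reverse, length_reverse, hUlen] at this
    exact this
  set U₁ := U.take (t - x.length) with hU₁
  have hUsplit : U = U₁ ++ x := by
    conv_lhs => rw [← take_append_drop (t - x.length) U]
    rw [hx2]
  have hU₁len : U₁.length = t - x.length := by
    simp [hU₁, length_take, hUlen]
  -- palindromicity of U₁
  have hU₁pal : U₁.reverse = U₁ := by
    have h3 : x.reverse ++ U₁.reverse ++ x = x.reverse ++ U₁ ++ x := by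
      have := heq
      rw [hUsplit] at this
      simpa [reverse_append, append_assoc] using this
    have h4 : U₁.reverse ++ x = U₁ ++ x := by
      apply List.append_cancel_left (as := x.reverse)
      simpa [append_assoc] using h3
    exact List.append_cancel_right h4
  refine ⟨U₁, hU₁pal, ?_, by omega⟩
  rw [← hUsplit]
  exact take_prefix _ _

end PalMore

section PalKey
variable {A : Type*}

/-- Lemma A: if `P` is the longest palindromic prefix of the palindrome `V`
followed by `x`, then `(Vx)⁺ = V x S` where `V = P x S`. -/
lemma palClosure_append_of_max {V x P : List A} (hV : V.reverse = V)
    (hP : P.reverse = P) (hx : x ≠ []) (hpre : P ++ x <+: V)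
    (hmax : ∀ Q : List A, Q.reverse = Q → Q ++ x <+: V → Q.length ≤ P.length) :
    palClosure (V ++ x) = V ++ x ++ V.drop (P.length + x.length) := by
  set S := V.drop (P.length + x.length) with hS
  have hlenPx : P.length + x.length ≤ V.length := by
    have := hpre.length_le
    simpa using this
  have hSlen : S.length = V.length - (P.length + x.length) := by simp [hS]
  have hVsplit : V = P ++ x ++ S := by
    have := prefix_iff_eq_append.mp hpre
    rw [hS]
    conv_lhs => rw [← this]
    simp [append_assoc]
  have hVrev : V = S.reverse ++ (x.reverse ++ P) := by
    conv_lhs => rw [← hV]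
    conv_lhs => rw [hVsplit]
    simp [reverse_append, hP, append_assoc]
  have hxlen : 0 < x.length := length_pos_iff.mpr hx
  have key := palClosure_eq_of (V ++ x) S.length ?_ ?_
  · rw [key]
    congr 1
    have h1 : (V ++ x).take S.length = V.take S.length := by
      rw [take_append, Nat.sub_eq_zero_of_le (by omega), take_zero, append_nil]
    rw [h1, List.reverse_take, hV]
    congr 1
    simp only [hS, length_drop]
    omega
  · -- drop S.length (V ++ x) is a palindrome
    have h1 : (V ++ x).drop S.length = x.reverse ++ P ++ x := by
      rw [drop_append, Nat.sub_eq_zero_of_le (by omega), drop_zero]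
      congr 1
      conv_lhs => rw [hVrev]
      rw [drop_append, length_reverse, Nat.sub_self, drop_zero,
        drop_eq_nil_of_le (by simp), nil_append]
    rw [h1]
    simp [reverse_append, hP, append_assoc]
  · -- minimality
    intro j hj hpal
    have hjV : j ≤ V.length := by omega
    have ht : x.length ≤ V.length - j := by omega
    obtain ⟨U₁, hU₁pal, hU₁pre, hU₁len⟩ := pal_suffix_structure hV j hjV ht hpal
    have := hmax U₁ hU₁pal hU₁pre
    omega

/-- Lemma A0: letter case with no palindromic prefix followed by `b`. -/
lemma palClosure_append_of_none {V : List A} {b : A} (hV : V.reverse = V)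
    (hnone : ∀ Q : List A, Q.reverse = Q → Q ++ [b] <+: V → False) :
    palClosure (V ++ [b]) = V ++ [b] ++ V := by
  have key := palClosure_eq_of (V ++ [b]) V.length ?_ ?_
  · rw [key]
    congr 1
    rw [take_append, Nat.sub_self, take_zero, append_nil,
      take_of_length_le (le_refl _), hV]
  · rw [drop_append, Nat.sub_self, drop_zero,
      drop_of_length_le (le_refl _), nil_append]
    rfl
  · intro j hj hpal
    have ht : ([b] : List A).length ≤ V.length - j := by simp; omega
    obtain ⟨U₁, hU₁pal, hU₁pre, hU₁len⟩ := pal_suffix_structure hV j (by omega) ht hpal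
    exact hnone U₁ hU₁pal hU₁pre

end PalKey

section PsiBasic
variable {A : Type*}

lemma psiList_snoc (l : List (List A)) (x : List A) :
    psiList (l ++ [x]) = palClosure (psiList l ++ x) := by
  simp [psiList, foldl_append]

lemma psiList_palindrome (l : List (List A)) : (psiList l).reverse = psiList l := by
  induction l using List.reverseRecOn with
  | nil => simp [psiList]
  | append_singleton l x ih => rw [psiList_snoc]; exact palClosure_palindrome _

lemma psiList_prefix_append (l t : List (List A)) : psiList l <+: psiList (l ++ t) := by
  induction t using List.reverseRecOn with
  | nil => simp
  | append_singleton t x ih =>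
      rw [← append_assoc, psiList_snoc]
      exact ih.trans ((prefix_append _ _).trans (prefix_palClosure _))

lemma psiList_take_prefix (l : List (List A)) (j : ℕ) :
    psiList (l.take j) <+: psiList l := by
  conv_rhs => rw [← take_append_drop j l]
  exact psiList_prefix_append _ _

lemma psiList_length_snoc (l : List (List A)) (x : List A) :
    (psiList l).length + x.length ≤ (psiList (l ++ [x])).length := by
  rw [psiList_snoc]
  calc (psiList l).length + x.length = (psiList l ++ x).length := by simp
  _ ≤ _ := palClosure_length_lb _

lemma psiWord_eq_psiList (w : List A) :
    psiWord w = psiList (w.map fun b => [b]) := by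
  rw [psiWord, psiList, List.foldl_map]

/-- appending one block: the previous value followed by the block is a prefix. -/
lemma psiList_snoc_prefix (l : List (List A)) (x : List A) :
    psiList l ++ x <+: psiList (l ++ [x]) := by
  rw [psiList_snoc]; exact prefix_palClosure _

end PsiBasic

section Period

variable {A : Type*}

/-- a palindromic proper prefix of a palindrome induces a period. -/
lemma period_of_pal_border {U T : List A} (hU : U.reverse = U) (hT : T.reverse = T)
    (hpre : U <+: T) (hlt : U.length < T.length) :
    IsPeriodOf (T.length - U.length) T := by
  set p := T.length - U.length with hp
  have hdrop : T.drop p = U := by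
    have h1 : T.take U.length = U := by
      obtain ⟨R, hR⟩ := hpre
      rw [← hR, take_append, Nat.sub_self, take_zero, append_nil, take_length]
    have h2 : (T.take U.length).reverse = T.drop p := by
      rw [List.reverse_take, hT]
    rw [← h2, h1, hU]
  refine ⟨by omega, fun i h => ?_⟩
  have hiU : i < U.length := by omega
  have h1 : U[i]? = T[i + p]? := by
    rw [← hdrop, List.getElem?_drop]
    congr 1
    omega
  have h2 : T[i]? = U[i]? := by
    obtain ⟨R, hR⟩ := hpre
    rw [← hR, List.getElem?_append_left hiU]
  have e1 : T[i]? = T[i + p]? := by rw [h2, h1]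
  simp only [List.get_eq_getElem]
  rwa [List.getElem?_eq_getElem (by omega : i < T.length),
    List.getElem?_eq_getElem h, Option.some_inj] at e1

/-- periods restrict to prefixes -/
lemma IsPeriodOf.of_prefix {p : ℕ} {Z T : List A} (h : IsPeriodOf p T) (hpre : Z <+: T) :
    IsPeriodOf p Z := by
  obtain ⟨R, hR⟩ := hpre
  refine ⟨h.1, fun i hi => ?_⟩
  have hZT : Z.length ≤ T.length := by rw [← hR]; simp
  have key : ∀ j, j < Z.length → Z[j]? = T[j]? := fun j hj => by
    rw [← hR, List.getElem?_append_left hj]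
  have e1 := h.2 i (by omega)
  simp only [List.get_eq_getElem] at e1 ⊢
  have e2 : Z[i]? = Z[i + p]? := by
    rw [key i (by omega), key (i + p) hi,
      List.getElem?_eq_getElem (by omega : i < T.length),
      List.getElem?_eq_getElem (by omega : i + p < T.length), e1]
  rwa [List.getElem?_eq_getElem (by omega : i < Z.length),
    List.getElem?_eq_getElem hi, Option.some_inj] at e2

end Period

section Structure
variable {A : Type*}

/-- Structural lemma: long palindromic prefixes of `ψ_X(l ++ u)` are the `ψ_X(l ++ u')`. -/
lemma pal_prefix_psiList {X : Set (List A)} {l : List (List A)}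
    (hper : ∀ p, IsPeriodOf p (psiList l) → ∀ x ∈ X, x.length ≤ p) :
    ∀ u : List (List A), (∀ x ∈ u, x ∈ X) →
    ∀ T : List A, T.reverse = T → T <+: psiList (l ++ u) →
      (psiList l).length ≤ T.length →
      ∃ j ≤ u.length, T = psiList (l ++ u.take j) := by
  intro u
  induction u using List.reverseRecOn with
  | nil =>
      intro _ T hT hpre hlen
      refine ⟨0, by simp, ?_⟩
      simp only [take_zero, append_nil] at *
      exact hpre.eq_of_length_le hlen
  | append_singleton u x ih =>
      intro hu T hT hpre hlen
      have hxX : x ∈ X := hu x (by simp)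
      set M := psiList (l ++ u) with hM
      have hwhole : psiList (l ++ (u ++ [x])) = palClosure (M ++ x) := by
        rw [← append_assoc, psiList_snoc]
      rw [hwhole] at hpre
      have hMpre : M <+: palClosure (M ++ x) :=
        (prefix_append M x).trans (prefix_palClosure _)
      rcases le_or_gt T.length M.length with hc1 | hc1'
      · obtain ⟨j, hj, hTj⟩ := ih (fun z hz => hu z (by simp [hz])) T hT
          (prefix_of_prefix_length_le hpre hMpre hc1) hlen
        refine ⟨j, by simp; omega, ?_⟩
        rwa [take_append, Nat.sub_eq_zero_of_le hj, take_zero, append_nil]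
      rcases le_or_gt (M.length + x.length) T.length with hc2 | hc2'
      · have hMx : M ++ x <+: T :=
          prefix_of_prefix_length_le (prefix_palClosure _) hpre (by simp; omega)
        have hTw : T = palClosure (M ++ x) :=
          hpre.eq_of_length_le (palClosure_length_le hT hMx)
        refine ⟨u.length + 1, by simp, ?_⟩
        rw [take_of_length_le (by simp), hwhole, hTw]
      · -- middle case: impossible
        exfalso
        have hMT : M <+: T := prefix_of_prefix_length_le hMpre hpre (by omega)
        have hperiod := period_of_pal_border (psiList_palindrome _) hT hMT hc1'
        have hZT : psiList l <+: T :=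
          (psiList_prefix_append l u).trans hMT
        have := hper _ (hperiod.of_prefix hZT) x hxX
        rw [show psiList (l ++ u) = M from rfl] at this
        omega

/-- B-level structural lemma: palindromic prefixes of `ψ(w)` are the `ψ(w')`. -/
lemma pal_prefix_psiWord {B : Type*} (w : List B) (T : List B) (hT : T.reverse = T)
    (hpre : T <+: psiWord w) : ∃ j ≤ w.length, T = psiWord (w.take j) := by
  have h := pal_prefix_psiList (X := Set.range fun b : B => [b]) (l := [])
    (by rintro p hp x ⟨b, rfl⟩; simpa [Nat.one_le_iff_ne_zero, Nat.pos_iff_ne_zero] using hp.1)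
    (w.map fun b => [b]) (by simp) T hT
    (by rw [nil_append, ← psiWord_eq_psiList]; exact hpre) (by simp [psiList])
  obtain ⟨j, hj, hTj⟩ := h
  refine ⟨j, by simpa using hj, ?_⟩
  rw [hTj, nil_append, ← map_take, ← psiWord_eq_psiList]

end Structure

section Helpers
variable {A B : Type*}

lemma pal_drop_of_pal_prefix {U T : List A} (hU : U.reverse = U) (hT : T.reverse = T)
    (hpre : U <+: T) : T.drop (T.length - U.length) = U := by
  have h1 : T.take U.length = U := by
    obtain ⟨R, hR⟩ := hpre
    rw [← hR, take_append, Nat.sub_self, take_zero, append_nil, take_length]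
  have h2 : (T.take U.length).reverse = T.drop (T.length - U.length) := by
    rw [List.reverse_take, hT]
  rw [← h2, h1, hU]

lemma pal_split_of_pal_prefix {U T : List A} (hU : U.reverse = U) (hT : T.reverse = T)
    (hpre : U <+: T) : T = T.take (T.length - U.length) ++ U := by
  conv_lhs => rw [← take_append_drop (T.length - U.length) T]
  rw [pal_drop_of_pal_prefix hU hT hpre]

lemma next_letter_eq {V Q : List A} {a c : A} (h1 : Q ++ [a] <+: V) (h2 : Q ++ [c] <+: V) :
    a = c := by
  have h3 : Q ++ [a] = Q ++ [c] :=
    (prefix_of_prefix_length_le h1 h2 (by simp)).eq_of_length (by simp)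
  simpa using List.append_cancel_left h3

lemma next_block_eq {X : Set (List A)} (hX : ∀ x ∈ X, ∀ y ∈ X, x <+: y → x = y)
    {W Q x x' : List A} (hx : x ∈ X) (hx' : x' ∈ X)
    (h1 : Q ++ x <+: W) (h2 : Q ++ x' <+: W) : x = x' := by
  rcases prefix_or_prefix_of_prefix h1 h2 with h | h
  · exact hX x hx x' hx' ((prefix_append_right_inj Q).mp h)
  · exact (hX x' hx' x hx ((prefix_append_right_inj Q).mp h)).symm

lemma psiList_append_take_prefix (l₁ t : List (List A)) (j : ℕ) :
    psiList (l₁ ++ t.take j) <+: psiList (l₁ ++ t) := by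
  conv_rhs => rw [← take_append_drop j t, ← append_assoc]
  exact psiList_prefix_append _ _

lemma psiWord_snoc (w : List A) (b : A) :
    psiWord (w ++ [b]) = palClosure (psiWord w ++ [b]) := by
  simp [psiWord, foldl_append]

lemma psiWord_palindrome (w : List A) : (psiWord w).reverse = psiWord w := by
  rw [psiWord_eq_psiList]; exact psiList_palindrome _

lemma psiWord_take_prefix (w : List A) (j : ℕ) : psiWord (w.take j) <+: psiWord w := by
  rw [psiWord_eq_psiList, psiWord_eq_psiList, map_take]
  exact psiList_take_prefix _ _

lemma take_succ_getElem (w : List A) (j : ℕ) (h : j < w.length) :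
    w.take (j + 1) = w.take j ++ [w[j]] := by
  rw [List.take_succ, List.getElem?_eq_getElem h]
  rfl

lemma psiWord_next_letter (w : List A) (j : ℕ) (h : j < w.length) :
    psiWord (w.take j) ++ [w[j]] <+: psiWord w := by
  have h1 : psiWord (w.take (j + 1)) = palClosure (psiWord (w.take j) ++ [w[j]]) := by
    rw [take_succ_getElem w j h, psiWord_snoc]
  have h2 : psiWord (w.take j) ++ [w[j]] <+: psiWord (w.take (j + 1)) := by
    rw [h1]; exact prefix_palClosure _
  exact h2.trans (psiWord_take_prefix w (j + 1))

lemma psiList_next_block (l : List (List A)) {B : Type*} (μ : B → List A)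
    (w : List B) (j : ℕ) (h : j < w.length) :
    psiList (l ++ (w.take j).map μ) ++ μ w[j] <+: psiList (l ++ w.map μ) := by
  have h1 : psiList (l ++ (w.take (j + 1)).map μ) =
      palClosure (psiList (l ++ (w.take j).map μ) ++ μ w[j]) := by
    rw [take_succ_getElem w j h, map_append, ← append_assoc]
    show psiList ((l ++ (w.take j).map μ) ++ [μ w[j]]) = _
    rw [psiList_snoc]
  have h2 : psiList (l ++ (w.take j).map μ) ++ μ w[j] <+: psiList (l ++ (w.take (j+1)).map μ) := by
    rw [h1]; exact prefix_palClosure _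
  refine h2.trans ?_
  rw [map_take]
  exact psiList_append_take_prefix _ _ _

end Helpers

/-- (Generalized Justin formula.) Let
`s = ψ_X(x₁x₂⋯)` be an `X`-AR word, `μ : B → X` a bijection, and
`z = x₁⋯x_m` with `ψ_X(z)` full. With `φ_z(b) = ψ_X(zμ(b)) ψ_X(z)⁻¹`, for every
`w ∈ B*` one has `ψ_X(zμ(w)) = φ_z(ψ(w)) ψ_X(z)`. -/
theorem stmt13 {A : Type*} {B : Type*} [Fintype A] [Fintype B]
    (hd : 1 < Fintype.card A)
    (X : Set (List A)) (hfin : X.Finite) (hX : IsMaximalPrefixCode X)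
    (y : ℕ → List A) (hy : ∀ i, y i ∈ X)
    (hpers : ∀ x ∈ X, ∀ N : ℕ, ∃ i ≥ N, y i = x)
    (μ : B → List A) (hinj : Function.Injective μ) (hran : Set.range μ = X)
    (m : ℕ) (hfull : Full X (List.ofFn fun i : Fin m => y i.1)) :
    ∀ w : List B,
      psiList ((List.ofFn fun i : Fin m => y i.1) ++ w.map μ) =
        ((psiWord w).map fun b =>
          (psiList ((List.ofFn fun i : Fin m => y i.1) ++ [μ b])).take
            ((psiList ((List.ofFn fun i : Fin m => y i.1) ++ [μ b])).length -
              (psiList (List.ofFn fun i : Fin m => y i.1)).length)).flatten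
        ++ psiList (List.ofFn fun i : Fin m => y i.1) := by
  classical
  intro w
  set l : List (List A) := List.ofFn fun i : Fin m => y i.1 with hl
  set Z : List A := psiList l with hZ
  set φ : B → List A := fun b =>
    (psiList (l ++ [μ b])).take ((psiList (l ++ [μ b])).length - Z.length) with hφ
  have hcode : ∀ x ∈ X, ∀ y ∈ X, x <+: y → x = y := hX.1.2
  have hne : ∀ x ∈ X, x ≠ [] := hX.1.1
  have hF2 : ∀ p, IsPeriodOf p Z → ∀ x ∈ X, x.length ≤ p := hfull.2.1
  have hZpal : Z.reverse = Z := psiList_palindrome l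
  have hμX : ∀ b, μ b ∈ X := fun b => by rw [← hran]; exact ⟨b, rfl⟩
  have hstruct : ∀ (v : List B) (T : List A), T.reverse = T →
      T <+: psiList (l ++ v.map μ) → Z.length ≤ T.length →
      ∃ j ≤ v.length, T = psiList (l ++ (v.take j).map μ) := by
    intro v T hT hpre hlen
    obtain ⟨j, hj, hTj⟩ := pal_prefix_psiList (X := X) hF2 (v.map μ)
      (by intro z hz; obtain ⟨b, -, rfl⟩ := mem_map.mp hz; exact hμX b) T hT hpre hlen
    refine ⟨j, by simpa using hj, ?_⟩
    rwa [← map_take] at hTj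
  suffices main : ∀ (n : ℕ) (v : List B), v.length ≤ n →
      psiList (l ++ v.map μ) = ((psiWord v).map φ).flatten ++ Z by
    exact main w.length w le_rfl
  intro n
  induction n with
  | zero =>
      intro v hv
      have : v = [] := by simpa using hv
      subst this
      simp [psiWord, ← hZ]
  | succ n ih =>
      intro v hv
      rcases eq_or_ne v [] with rfl | hvne
      · simp [psiWord, ← hZ]
      obtain ⟨w', b, rfl⟩ := (v.eq_nil_or_concat).resolve_left hvne
      rw [concat_eq_append] at *
      have hw'len : w'.length ≤ n := by
        simp only [length_append, length_cons, length_nil] at hv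
        omega
      set V := psiWord w' with hV
      set W := psiList (l ++ w'.map μ) with hW
      have IH1 : W = ((V.map φ).flatten) ++ Z := ih w' hw'len
      set x := μ b with hx
      have hxX : x ∈ X := hμX b
      have hxne : x ≠ [] := hne x hxX
      have hVpal : V.reverse = V := psiWord_palindrome w'
      have hWpal : W.reverse = W := psiList_palindrome _
      have hZWpre : Z <+: W := psiList_prefix_append l _
      have hLHS : psiList (l ++ (w' ++ [b]).map μ) = palClosure (W ++ x) := by
        rw [map_append, ← append_assoc]
        show psiList ((l ++ w'.map μ) ++ [x]) = _
        rw [psiList_snoc]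
      have hbnext : ∀ j, (hj : j < w'.length) →
          psiWord (w'.take j) ++ [w'[j]] <+: V := fun j hj =>
        psiWord_next_letter w' j hj
      have hAnext : ∀ j, (hj : j < w'.length) →
          psiList (l ++ (w'.take j).map μ) ++ μ w'[j] <+: W := fun j hj =>
        psiList_next_block l μ w' j hj
      have hbig : ∀ Q : List A, Q.reverse = Q → Q ++ x <+: W → Z.length ≤ Q.length →
          ∃ j, j < w'.length ∧ Q = psiList (l ++ (w'.take j).map μ) ∧
            psiWord (w'.take j) ++ [b] <+: V := by
        intro Q hQ hQx hQlen
        obtain ⟨j, hj, hQj⟩ := hstruct w' Q hQ ((prefix_append Q x).trans hQx) hQlen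
        rcases hj.lt_or_eq with hjlt | hjeq
        · have hblock := hAnext j hjlt
          have hxeq : x = μ w'[j] :=
            next_block_eq hcode hxX (hμX _) (hQj ▸ hQx) hblock
          have hbe : b = w'[j] := hinj (hx ▸ hxeq)
          refine ⟨j, hjlt, hQj, ?_⟩
          rw [hbe]
          exact hbnext j hjlt
        · exfalso
          subst hjeq
          rw [take_length, ← hW] at hQj
          have h1 := hQx.length_le
          rw [hQj, length_append] at h1
          have : x.length = 0 := by omega
          exact hxne (length_eq_zero_iff.mp this)
      by_cases hJ : ∃ j, j < w'.length ∧ psiWord (w'.take j) ++ [b] <+: V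
      · -- Case 1
        obtain ⟨j₀, hj₀⟩ := hJ
        set pred := fun j => j < w'.length ∧ psiWord (w'.take j) ++ [b] <+: V with hpred
        set i := Nat.findGreatest pred w'.length with hi
        have hiP : pred i := Nat.findGreatest_spec (le_of_lt hj₀.1) hj₀
        have himax : ∀ j, pred j → j ≤ i := fun j hj =>
          Nat.le_findGreatest (le_of_lt hj.1) hj
        set P := psiWord (w'.take i) with hP
        have hPpal : P.reverse = P := psiWord_palindrome _
        have hPb : P ++ [b] <+: V := hiP.2
        have hmaxB : ∀ Q : List B, Q.reverse = Q → Q ++ [b] <+: V →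
            Q.length ≤ P.length := by
          intro Q hQ hQb
          obtain ⟨j, hj, hQj⟩ := pal_prefix_psiWord w' Q hQ ((prefix_append _ _).trans hQb)
          rcases hj.lt_or_eq with hjlt | hjeq
          · have hji : j ≤ i := himax j ⟨hjlt, by rwa [← hQj]⟩
            rw [hQj, hP]
            have : psiWord (w'.take j) <+: psiWord (w'.take i) := by
              rw [show w'.take j = (w'.take i).take j by
                rw [take_take, Nat.min_eq_left hji]]
              exact psiWord_take_prefix _ _
            exact this.length_le
          · exfalso
            subst hjeq
            rw [take_length, ← hV] at hQj
            have h1 := hQb.length_le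
            rw [hQj, length_append] at h1
            simp at h1
        have hSB : psiWord (w' ++ [b]) = V ++ [b] ++ V.drop (P.length + 1) := by
          rw [psiWord_snoc, ← hV]
          have := palClosure_append_of_max (x := [b]) hVpal hPpal (by simp) hPb hmaxB
          simpa using this
        set S_B := V.drop (P.length + 1) with hSBdef
        have hVdec : V = P ++ [b] ++ S_B := by
          have h := (prefix_iff_eq_append.mp hPb).symm
          rw [hSBdef]
          simpa [append_assoc] using h
        have hIH2 : psiList (l ++ (w'.take i).map μ) =
            ((psiWord (w'.take i)).map φ).flatten ++ Z :=
          ih (w'.take i) (by simp [length_take]; omega)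
        set Pi := psiList (l ++ (w'.take i).map μ) with hPi
        have hPipal : Pi.reverse = Pi := psiList_palindrome _
        have hbee : b = w'[i]'hiP.1 := next_letter_eq hPb (hbnext i hiP.1)
        have hPix : Pi ++ x <+: W := by
          rw [hx, hbee]
          exact hAnext i hiP.1
        have hmaxA : ∀ Q : List A, Q.reverse = Q → Q ++ x <+: W →
            Q.length ≤ Pi.length := by
          intro Q hQ hQx
          rcases lt_or_ge Q.length Z.length with hlt | hge
          · have h2 : Z.length ≤ Pi.length := (psiList_prefix_append l _).length_le
            omega
          · obtain ⟨j, hjlt, hQj, hjb⟩ := hbig Q hQ hQx hge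
            have hji : j ≤ i := himax j ⟨hjlt, hjb⟩
            rw [hQj]
            have : psiList (l ++ (w'.take j).map μ) <+: Pi := by
              rw [hPi, show w'.take j = (w'.take i).take j by
                rw [take_take, Nat.min_eq_left hji], map_take]
              exact psiList_append_take_prefix _ _ _
            exact this.length_le
        have hkey := palClosure_append_of_max hWpal hPipal hxne hPix hmaxA
        set S₁ := W.drop (Pi.length + x.length) with hS₁
        have hWdec : W = Pi ++ x ++ S₁ := by
          have h := (prefix_iff_eq_append.mp hPix).symm
          rw [hS₁]
          simpa [append_assoc] using h
        have hPiZ : Pi = (P.map φ).flatten ++ Z := by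
          rw [hIH2, ← hP]
        have hΦV : (V.map φ).flatten =
            (P.map φ).flatten ++ (φ b ++ (S_B.map φ).flatten) := by
          conv_lhs => rw [hVdec]
          simp [append_assoc]
        have e1 : W = (P.map φ).flatten ++ (φ b ++ ((S_B.map φ).flatten ++ Z)) := by
          rw [IH1, hΦV]
          simp [append_assoc]
        have e2 : W = (P.map φ).flatten ++ (Z ++ (x ++ S₁)) := by
          rw [hWdec, hPiZ]
          simp [append_assoc]
        have hcancel : φ b ++ ((S_B.map φ).flatten ++ Z) = Z ++ (x ++ S₁) :=
          append_cancel_left (e1.symm.trans e2)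
        rw [hLHS, hkey, hSB]
        calc W ++ x ++ S₁
            = ((V.map φ).flatten ++ Z) ++ x ++ S₁ := by rw [← IH1]
          _ = (V.map φ).flatten ++ (Z ++ (x ++ S₁)) := by simp [append_assoc]
          _ = (V.map φ).flatten ++ (φ b ++ ((S_B.map φ).flatten ++ Z)) := by
              rw [← hcancel]
          _ = _ := by simp [append_assoc]
      · -- Case 2
        push_neg at hJ
        have hnone : ∀ Q : List B, Q.reverse = Q → Q ++ [b] <+: V → False := by
          intro Q hQ hQb
          obtain ⟨j, hj, hQj⟩ := pal_prefix_psiWord w' Q hQ ((prefix_append _ _).trans hQb)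
          rcases hj.lt_or_eq with hjlt | hjeq
          · exact hJ j hjlt (by rwa [← hQj])
          · subst hjeq
            rw [take_length, ← hV] at hQj
            have h1 := hQb.length_le
            rw [hQj, length_append] at h1
            simp at h1
        have hSBv : psiWord (w' ++ [b]) = V ++ [b] ++ V := by
          rw [psiWord_snoc, ← hV]
          exact palClosure_append_of_none hVpal hnone
        obtain ⟨r, hrget, hrmax, hrpre, hrlast⟩ := hfull.2.2 x hxX
        set P₀ := psiList (l.take r.1) with hP₀
        have hP₀pal : P₀.reverse = P₀ := psiList_palindrome _
        have hP₀Z : P₀ ++ x <+: Z := hrpre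
        have hmaxZ : ∀ Q : List A, Q.reverse = Q → Q ++ x <+: Z →
            Q.length ≤ P₀.length := hrlast
        have hP₀len : P₀.length + x.length ≤ Z.length := by
          have := hP₀Z.length_le
          simpa using this
        have hmaxA : ∀ Q : List A, Q.reverse = Q → Q ++ x <+: W →
            Q.length ≤ P₀.length := by
          intro Q hQ hQx
          rcases lt_or_ge Q.length Z.length with hlt | hge
          · have hQZ : Q <+: Z := prefix_of_prefix_length_le
              ((prefix_append _ _).trans hQx) hZWpre (le_of_lt hlt)
            have hper := period_of_pal_border hQ hZpal hQZ hlt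
            have hxle := hF2 _ hper x hxX
            have hQxZ : Q ++ x <+: Z := prefix_of_prefix_length_le hQx hZWpre
              (by simp only [length_append]; omega)
            exact hmaxZ Q hQ hQxZ
          · exfalso
            obtain ⟨j, hjlt, hQj, hjb⟩ := hbig Q hQ hQx hge
            exact hJ j hjlt hjb
        have hP₀W : P₀ ++ x <+: W := hP₀Z.trans hZWpre
        have hkey := palClosure_append_of_max hWpal hP₀pal hxne hP₀W hmaxA
        set S₁ := W.drop (P₀.length + x.length) with hS₁
        have hZx : psiList (l ++ [x]) = Z ++ x ++ Z.drop (P₀.length + x.length) := by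
          rw [psiList_snoc, ← hZ]
          exact palClosure_append_of_max hZpal hP₀pal hxne hP₀Z hmaxZ
        set S₀ := Z.drop (P₀.length + x.length) with hS₀
        have hMpal : (Z ++ x ++ S₀).reverse = Z ++ x ++ S₀ := by
          rw [← hZx]
          exact psiList_palindrome _
        have hphib : φ b ++ Z = Z ++ x ++ S₀ := by
          have hZM : Z <+: Z ++ x ++ S₀ := by
            rw [append_assoc]; exact prefix_append _ _
          have hsplit := pal_split_of_pal_prefix hZpal hMpal hZM
          have hφb : φ b = (Z ++ x ++ S₀).take ((Z ++ x ++ S₀).length - Z.length) := by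
            have h0 : φ b = (psiList (l ++ [μ b])).take
                ((psiList (l ++ [μ b])).length - Z.length) := rfl
            rw [h0, ← hx, hZx]
          rw [hφb]
          exact hsplit.symm
        have hWrev : W = Z ++ ((V.map φ).flatten).reverse := by
          conv_lhs => rw [← hWpal]
          rw [IH1, reverse_append, hZpal]
        have hS₁eq : S₁ = S₀ ++ ((V.map φ).flatten).reverse := by
          rw [hS₁]
          conv_lhs => rw [hWrev]
          rw [drop_append, Nat.sub_eq_zero_of_le hP₀len, drop_zero, hS₀]
        rw [hLHS, hkey, hSBv]
        calc W ++ x ++ S₁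
            = (V.map φ).flatten ++ (Z ++ x ++ S₀) ++ ((V.map φ).flatten).reverse := by
              rw [IH1, hS₁eq]
              simp [append_assoc]
          _ = (V.map φ).flatten ++ (φ b ++ Z) ++ ((V.map φ).flatten).reverse := by
              rw [hphib]
          _ = (V.map φ).flatten ++ φ b ++ (Z ++ ((V.map φ).flatten).reverse) := by
              simp [append_assoc]
          _ = (V.map φ).flatten ++ φ b ++ W := by rw [← hWrev]
          _ = _ := by
              rw [IH1]
              simp [append_assoc]
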